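/- The function P(ξ) = ξ − η(ξ) is monotone nondecreasing on ℝ. -/
import Mathlib


open MeasureTheory Real

/-- The soft-thresholding function induced by the max-scheduling policy; at
`ξ = 0` both integrals vanish and Lean's `0/0 = 0` gives `eta σ ρ 0 = 0`. -/
noncomputable def eta (σ ρ : ℝ) (ξ : ℝ) : ℝ :=
  (∫ τ in (-|ξ|)..|ξ|, τ * Real.exp (-(τ - ρ * ξ) ^ 2 / (2 * σ ^ 2 * (1 - ρ ^ 2)))) /
  (∫ τ in (-|ξ|)..|ξ|, Real.exp (-(τ - ρ * ξ) ^ 2 / (2 * σ ^ 2 * (1 - ρ ^ 2))))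

namespace EtaAux

open intervalIntegral

/-- The (unnormalized) Gaussian weight. -/
noncomputable def w (c μ t : ℝ) : ℝ := Real.exp (-(t - μ) ^ 2 / c)

lemma w_cont (c μ : ℝ) : Continuous (w c μ) := by unfold w; fun_prop

lemma w_pos (c μ t : ℝ) : 0 < w c μ t := Real.exp_pos _

lemma w_int (c μ a b : ℝ) : IntervalIntegrable (w c μ) volume a b :=
  (w_cont c μ).intervalIntegrable _ _

lemma tw_int (c μ a b : ℝ) : IntervalIntegrable (fun t => t * w c μ t) volume a b :=
  (continuous_id.mul (w_cont c μ)).intervalIntegrable _ _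

/-- Truncated Gaussian mean. -/
noncomputable def tmean (c μ a b : ℝ) : ℝ :=
  (∫ t in a..b, t * w c μ t) / (∫ t in a..b, w c μ t)

lemma den_pos (c μ : ℝ) {a b : ℝ} (hab : a < b) : 0 < ∫ t in a..b, w c μ t := by
  apply intervalIntegral.intervalIntegral_pos_of_pos (w_int c μ a b) _ hab
  intro x; exact w_pos c μ x

/-- Chebyshev / FKG correlation inequality on an interval, for a nonnegative
continuous weight `f` and a continuous monotone function `h`. -/
lemma chebyshev {a b : ℝ} (hab : a ≤ b) {f h : ℝ → ℝ} (hf : Continuous f)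
    (hh : Continuous h) (hf0 : ∀ x, 0 ≤ f x) (hm : Monotone h) :
    (∫ x in a..b, x * f x) * (∫ x in a..b, h x * f x) ≤
      (∫ x in a..b, x * (h x * f x)) * (∫ x in a..b, f x) := by
  set A := ∫ x in a..b, x * (h x * f x) with hA
  set B := ∫ x in a..b, f x with hB
  set C := ∫ x in a..b, x * f x with hC
  set D := ∫ x in a..b, h x * f x with hD
  have hif : IntervalIntegrable f volume a b := hf.intervalIntegrable _ _
  have hihf : IntervalIntegrable (fun y => h y * f y) volume a b :=
    (hh.mul hf).intervalIntegrable _ _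
  have hiyf : IntervalIntegrable (fun y => y * f y) volume a b :=
    (continuous_id.mul hf).intervalIntegrable _ _
  have hiyhf : IntervalIntegrable (fun y => y * (h y * f y)) volume a b :=
    (continuous_id.mul (hh.mul hf)).intervalIntegrable _ _
  have hG : ∀ x : ℝ, (∫ y in a..b, (x - y) * (h x - h y) * (f x * f y))
      = f x * ((x * h x) * B - x * D - h x * C + A) := by
    intro x
    have e : ∀ y : ℝ, (x - y) * (h x - h y) * (f x * f y)
        = f x * ((x * h x) * f y - x * (h y * f y) - h x * (y * f y) + y * (h y * f y)) := by
      intro y; ring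
    simp_rw [e]
    rw [intervalIntegral.integral_const_mul]
    congr 1
    rw [intervalIntegral.integral_add (((hif.const_mul _).sub (hihf.const_mul _)).sub
        (hiyf.const_mul _)) hiyhf,
      intervalIntegral.integral_sub ((hif.const_mul _).sub (hihf.const_mul _))
        (hiyf.const_mul _),
      intervalIntegral.integral_sub (hif.const_mul _) (hihf.const_mul _),
      intervalIntegral.integral_const_mul, intervalIntegral.integral_const_mul,
      intervalIntegral.integral_const_mul]
  have key : 0 ≤ ∫ x in a..b, f x * ((x * h x) * B - x * D - h x * C + A) := by
    apply intervalIntegral.integral_nonneg hab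
    intro u _
    rw [← hG u]
    apply intervalIntegral.integral_nonneg hab
    intro v _
    have h1 : 0 ≤ (u - v) * (h u - h v) := by
      rcases le_total u v with h' | h'
      · have := mul_nonneg (sub_nonneg.2 h') (sub_nonneg.2 (hm h'))
        nlinarith
      · exact mul_nonneg (sub_nonneg.2 h') (sub_nonneg.2 (hm h'))
    exact mul_nonneg h1 (mul_nonneg (hf0 u) (hf0 v))
  have e2 : ∀ x : ℝ, f x * ((x * h x) * B - x * D - h x * C + A)
      = (x * (h x * f x)) * B - (x * f x) * D - (h x * f x) * C + f x * A := by
    intro x; ring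
  rw [show (fun x => f x * ((x * h x) * B - x * D - h x * C + A))
      = fun x => (x * (h x * f x)) * B - (x * f x) * D - (h x * f x) * C + f x * A
      from funext e2] at key
  rw [intervalIntegral.integral_add (((hiyhf.mul_const _).sub (hiyf.mul_const _)).sub
      (hihf.mul_const _)) (hif.mul_const _),
    intervalIntegral.integral_sub ((hiyhf.mul_const _).sub (hiyf.mul_const _))
      (hihf.mul_const _),
    intervalIntegral.integral_sub (hiyhf.mul_const _) (hiyf.mul_const _),
    intervalIntegral.integral_mul_const, intervalIntegral.integral_mul_const,
    intervalIntegral.integral_mul_const, intervalIntegral.integral_mul_const] at key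
  change 0 ≤ A * B - C * D - D * C + B * A at key
  linarith

/-- The truncated mean is monotone in the location parameter `μ`. -/
lemma tmean_mono_mu {c : ℝ} (hc : 0 < c) {a b μ₁ μ₂ : ℝ} (hab : a < b) (hμ : μ₁ ≤ μ₂) :
    tmean c μ₁ a b ≤ tmean c μ₂ a b := by
  set h : ℝ → ℝ := fun t => Real.exp ((2 * (μ₂ - μ₁) * t + (μ₁ ^ 2 - μ₂ ^ 2)) / c) with hhdef
  have hw2 : ∀ t : ℝ, w c μ₂ t = h t * w c μ₁ t := by
    intro t
    rw [hhdef]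
    unfold w
    rw [← Real.exp_add]
    congr 1
    field_simp
    ring
  have hhc : Continuous h := by fun_prop
  have hhm : Monotone h := by
    intro s t hst
    apply Real.exp_le_exp.2
    apply div_le_div_of_nonneg_right _ hc.le
    nlinarith
  have cheb := chebyshev hab.le (w_cont c μ₁) hhc (fun x => (w_pos c μ₁ x).le) hhm
  have hZ1 : 0 < ∫ t in a..b, w c μ₁ t := den_pos c μ₁ hab
  have hZ2 : 0 < ∫ t in a..b, w c μ₂ t := den_pos c μ₂ hab
  unfold tmean
  rw [div_le_div_iff₀ hZ1 hZ2]
  have en : (∫ t in a..b, t * w c μ₂ t) = ∫ t in a..b, t * (h t * w c μ₁ t) := by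
    simp_rw [hw2]
  have ed : (∫ t in a..b, w c μ₂ t) = ∫ t in a..b, h t * w c μ₁ t := by
    simp_rw [hw2]
  rw [en, ed]
  exact cheb

lemma integral_tw_le (c μ : ℝ) {a b : ℝ} (hab : a ≤ b) :
    (∫ t in a..b, t * w c μ t) ≤ b * ∫ t in a..b, w c μ t := by
  rw [← intervalIntegral.integral_const_mul]
  apply intervalIntegral.integral_mono_on hab (tw_int c μ a b)
    ((w_int c μ a b).const_mul b)
  intro x hx
  exact mul_le_mul_of_nonneg_right hx.2 (w_pos c μ x).le

lemma le_integral_tw (c μ : ℝ) {a b : ℝ} (hab : a ≤ b) :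
    a * (∫ t in a..b, w c μ t) ≤ ∫ t in a..b, t * w c μ t := by
  rw [← intervalIntegral.integral_const_mul]
  apply intervalIntegral.integral_mono_on hab ((w_int c μ a b).const_mul a)
    (tw_int c μ a b)
  intro x hx
  exact mul_le_mul_of_nonneg_right hx.1 (w_pos c μ x).le

/-- The truncated mean is monotone in the lower truncation point. -/
lemma tmean_mono_left (c μ : ℝ) {a' a b : ℝ} (ha : a' ≤ a) (hab : a < b) :
    tmean c μ a' b ≤ tmean c μ a b := by
  rcases eq_or_lt_of_le ha with rfl | ha'
  · exact le_rfl
  have hZ1 : 0 < ∫ t in a'..a, w c μ t := den_pos c μ ha'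
  have hZ2 : 0 < ∫ t in a..b, w c μ t := den_pos c μ hab
  have hsplitZ : (∫ t in a'..b, w c μ t) = (∫ t in a'..a, w c μ t) + ∫ t in a..b, w c μ t :=
    (intervalIntegral.integral_add_adjacent_intervals (w_int c μ a' a) (w_int c μ a b)).symm
  have hsplitN : (∫ t in a'..b, t * w c μ t)
      = (∫ t in a'..a, t * w c μ t) + ∫ t in a..b, t * w c μ t :=
    (intervalIntegral.integral_add_adjacent_intervals (tw_int c μ a' a) (tw_int c μ a b)).symm
  have hN1 : (∫ t in a'..a, t * w c μ t) ≤ a * ∫ t in a'..a, w c μ t :=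
    integral_tw_le c μ ha'.le
  have hN2 : a * (∫ t in a..b, w c μ t) ≤ ∫ t in a..b, t * w c μ t :=
    le_integral_tw c μ hab.le
  unfold tmean
  rw [hsplitZ, hsplitN, div_le_div_iff₀ (by linarith) hZ2]
  nlinarith

/-- Translation invariance of the truncated mean. -/
lemma tmean_translate (c μ : ℝ) {a b : ℝ} (δ : ℝ) (hab : a < b) :
    tmean c μ a b = tmean c (μ - δ) (a - δ) (b - δ) + δ := by
  have hZ : (0:ℝ) < ∫ t in a..b, w c μ t := den_pos c μ hab
  have ed : (∫ t in (a - δ)..(b - δ), w c (μ - δ) t) = ∫ t in a..b, w c μ t := by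
    rw [← intervalIntegral.integral_comp_sub_right (fun t => w c (μ - δ) t) δ]
    congr 1
    funext t
    unfold w
    congr 2
    ring
  have en : (∫ t in (a - δ)..(b - δ), t * w c (μ - δ) t)
      = (∫ t in a..b, t * w c μ t) - δ * ∫ t in a..b, w c μ t := by
    rw [← intervalIntegral.integral_comp_sub_right (fun t => t * w c (μ - δ) t) δ]
    have e : ∀ t : ℝ, (t - δ) * w c (μ - δ) (t - δ) = t * w c μ t - δ * w c μ t := by
      intro t
      have : w c (μ - δ) (t - δ) = w c μ t := by unfold w; congr 2; ring
      rw [this]; ring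
    simp_rw [e]
    rw [intervalIntegral.integral_sub (tw_int c μ a b) ((w_int c μ a b).const_mul δ),
      intervalIntegral.integral_const_mul]
  unfold tmean
  rw [ed, en, sub_div, mul_div_assoc, div_self hZ.ne', mul_one]
  ring

end EtaAux

open EtaAux

lemma eta_eq (σ ρ : ℝ) {ξ : ℝ} (hξ : 0 < ξ) :
    eta σ ρ ξ = tmean (2 * σ ^ 2 * (1 - ρ ^ 2)) (ρ * ξ) (-ξ) ξ := by
  unfold eta tmean w
  rw [abs_of_pos hξ]

lemma eta_zero (σ ρ : ℝ) : eta σ ρ 0 = 0 := by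
  simp [eta]

lemma eta_neg (σ ρ ξ : ℝ) : eta σ ρ (-ξ) = -eta σ ρ ξ := by
  unfold eta
  rw [abs_neg]
  have hd : (∫ τ in (-|ξ|)..|ξ|, Real.exp (-(τ - ρ * -ξ) ^ 2 / (2 * σ ^ 2 * (1 - ρ ^ 2))))
      = ∫ τ in (-|ξ|)..|ξ|, Real.exp (-(τ - ρ * ξ) ^ 2 / (2 * σ ^ 2 * (1 - ρ ^ 2))) := by
    rw [show (fun τ : ℝ => Real.exp (-(τ - ρ * -ξ) ^ 2 / (2 * σ ^ 2 * (1 - ρ ^ 2))))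
        = fun τ : ℝ => (fun t : ℝ =>
          Real.exp (-(t - ρ * ξ) ^ 2 / (2 * σ ^ 2 * (1 - ρ ^ 2)))) (-τ) from
      funext fun τ => by simp only []; congr 2; ring]
    rw [intervalIntegral.integral_comp_neg
      (fun t : ℝ => Real.exp (-(t - ρ * ξ) ^ 2 / (2 * σ ^ 2 * (1 - ρ ^ 2))))]
    simp [neg_neg]
  have hn : (∫ τ in (-|ξ|)..|ξ|, τ * Real.exp (-(τ - ρ * -ξ) ^ 2 / (2 * σ ^ 2 * (1 - ρ ^ 2))))
      = -∫ τ in (-|ξ|)..|ξ|, τ * Real.exp (-(τ - ρ * ξ) ^ 2 / (2 * σ ^ 2 * (1 - ρ ^ 2))) := by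
    rw [show (fun τ : ℝ => τ * Real.exp (-(τ - ρ * -ξ) ^ 2 / (2 * σ ^ 2 * (1 - ρ ^ 2))))
        = fun τ : ℝ => -((fun t : ℝ =>
          t * Real.exp (-(t - ρ * ξ) ^ 2 / (2 * σ ^ 2 * (1 - ρ ^ 2)))) (-τ)) from
      funext fun τ => by
        simp only []
        have he : Real.exp (-(τ - ρ * -ξ) ^ 2 / (2 * σ ^ 2 * (1 - ρ ^ 2)))
            = Real.exp (-(-τ - ρ * ξ) ^ 2 / (2 * σ ^ 2 * (1 - ρ ^ 2))) := by congr 2; ring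
        rw [he]; ring]
    rw [intervalIntegral.integral_neg, intervalIntegral.integral_comp_neg
      (fun t : ℝ => t * Real.exp (-(t - ρ * ξ) ^ 2 / (2 * σ ^ 2 * (1 - ρ ^ 2))))]
    simp [neg_neg]
  rw [hd, hn, neg_div]

lemma main_half (σ ρ : ℝ) (hσ : 0 < σ) (hρ0 : 0 ≤ ρ) (hρ1 : ρ < 1) {x y : ℝ}
    (hx : 0 ≤ x) (hxy : x ≤ y) : x - eta σ ρ x ≤ y - eta σ ρ y := by
  set c := 2 * σ ^ 2 * (1 - ρ ^ 2) with hcdef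
  have hρ2 : ρ ^ 2 < 1 := by nlinarith
  have hc : 0 < c := by
    have hs2 : 0 < σ ^ 2 := by positivity
    rw [hcdef]; nlinarith
  rcases eq_or_lt_of_le hxy with rfl | hlt
  · exact le_rfl
  rcases eq_or_lt_of_le hx with rfl | hx0
  · -- x = 0 : need eta σ ρ y ≤ y
    rw [eta_zero]
    have hy : 0 < y := hlt
    have hZ : 0 < ∫ t in (-y)..y, w c (ρ * y) t := den_pos c _ (by linarith)
    have := integral_tw_le c (ρ * y) (a := -y) (b := y) (by linarith)
    have : eta σ ρ y ≤ y := by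
      rw [eta_eq σ ρ hy, tmean, div_le_iff₀ hZ]
      linarith
    linarith
  · -- 0 < x < y
    have hy : 0 < y := lt_trans hx0 hlt
    set δ := y - x with hδdef
    have h1 : eta σ ρ y = tmean c (ρ * y) (-y) y := eta_eq σ ρ hy
    have h2 : tmean c (ρ * y) (-y) y = tmean c (ρ * y - δ) (x - 2 * y) x + δ := by
      have := tmean_translate c (ρ * y) (a := -y) (b := y) δ (by linarith)
      rw [this]
      congr 2 <;> rw [hδdef] <;> ring
    have h3 : tmean c (ρ * y - δ) (x - 2 * y) x ≤ tmean c (ρ * x) (x - 2 * y) x := by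
      apply tmean_mono_mu hc (by linarith)
      rw [hδdef]; nlinarith
    have h4 : tmean c (ρ * x) (x - 2 * y) x ≤ tmean c (ρ * x) (-x) x := by
      apply tmean_mono_left c (ρ * x) (by linarith) (by linarith)
    have h5 : tmean c (ρ * x) (-x) x = eta σ ρ x := (eta_eq σ ρ hx0).symm
    have : eta σ ρ y ≤ eta σ ρ x + δ := by
      rw [h1, h2, ← h5]
      linarith
    rw [hδdef] at this
    linarith

/-- `P(ξ) = ξ − η(ξ)` is monotone nondecreasing on `ℝ`. -/
theorem P_monotone (σ ρ : ℝ) (hσ : 0 < σ) (hρ0 : 0 ≤ ρ) (hρ1 : ρ < 1) :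
    Monotone (fun ξ : ℝ => ξ - eta σ ρ ξ) := by
  intro a b hab
  simp only
  rcases le_or_gt 0 a with ha | ha
  · exact main_half σ ρ hσ hρ0 hρ1 ha hab
  · rcases le_or_gt b 0 with hb | hb
    · have h := main_half σ ρ hσ hρ0 hρ1 (x := -b) (y := -a) (by linarith) (by linarith)
      rw [eta_neg, eta_neg] at h
      linarith
    · have h1 := main_half σ ρ hσ hρ0 hρ1 (x := 0) (y := -a) (by linarith) (by linarith)
      have h2 := main_half σ ρ hσ hρ0 hρ1 (x := 0) (y := b) le_rfl hb.le
      rw [eta_neg] at h1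
      rw [eta_zero] at h1 h2
      linarith
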